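/- Let X be a topological space, A a commutative semiring, and ψ : X → A any function. Then there exists a topology τ on A such that: (i) (A, τ) is a topological semiring; (ii) ψ : X → (A, τ) is continuous; and (iii) for every semiring homomorphism φ : A → B into a topological semiring B, φ is continuous with respect to τ if and only if the composition φ ∘ ψ : X → B is continuous. -/
import Mathlib

/-!
Statement 0: For any function `ψ : X → A` from a topological space to a (commutative) semiring,
there is a topology `τ` on `A` making `A` a topological semiring, making `ψ` continuous, and such
that a semiring homomorphism `φ : A → B` into a topological semiring `B` is `τ`-continuous iff
`φ ∘ ψ` is continuous.
-/

universe u v w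

theorem universal_topology_on_semiring {X : Type v} {A : Type w}
    [TopologicalSpace X] [CommSemiring A] [Nontrivial A] (ψ : X → A) :
    ∃ τ : TopologicalSpace A,
      (@ContinuousAdd A τ _) ∧ (@ContinuousMul A τ _) ∧ (@Continuous X A _ τ ψ) ∧
      ∀ (B : Type u) [CommSemiring B] [Nontrivial B] (tB : TopologicalSpace B),
        @ContinuousAdd B tB _ → @ContinuousMul B tB _ →
        ∀ φ : A →+* B,
          (@Continuous A B τ tB φ ↔ @Continuous X B _ tB fun x => φ (ψ x)) := by
  classical
  set S : Set (TopologicalSpace A) :=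
    {t | (@ContinuousAdd A t _) ∧ (@ContinuousMul A t _) ∧
      TopologicalSpace.coinduced ψ ‹TopologicalSpace X› ≤ t} with hS
  refine ⟨sInf S, ?_, ?_, ?_, ?_⟩
  · exact continuousAdd_sInf fun t ht => ht.1
  · exact continuousMul_sInf fun t ht => ht.2.1
  · rw [continuous_iff_coinduced_le]
    exact le_sInf fun t ht => ht.2.2
  · intro B _ _ tB hAdd hMul φ
    constructor
    · intro hφ
      rw [continuous_iff_coinduced_le] at *
      calc TopologicalSpace.coinduced (fun x => φ (ψ x)) ‹TopologicalSpace X›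
          = TopologicalSpace.coinduced φ
              (TopologicalSpace.coinduced ψ ‹TopologicalSpace X›) := by
            rw [coinduced_compose]; rfl
        _ ≤ TopologicalSpace.coinduced φ (sInf S) :=
            coinduced_mono (le_sInf fun t ht => ht.2.2)
        _ ≤ tB := hφ
    · intro hψφ
      have hmem : TopologicalSpace.induced φ tB ∈ S := by
        refine ⟨?_, ?_, ?_⟩
        · exact @continuousAdd_induced A B (A →+* B) _ _ _ _ tB hAdd φ
        · exact @continuousMul_induced A B (A →+* B) _ _ _ _ tB hMul φ
        · rw [← continuous_iff_coinduced_le, continuous_induced_rng]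
          exact hψφ
      have h1 : sInf S ≤ TopologicalSpace.induced φ tB := sInf_le hmem
      rw [continuous_iff_le_induced]
      exact h1
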